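/- arXiv:1608.07749 — 6 statements merged into one kernel-verified Lean document; each statement's English description precedes it below -/
import Mathlib

section
/- Let X be a finite connected cubic graph on 2n vertices and let G be a subgroup of the automorphism group of X that acts simply transitively on the arcs of X (i.e., G is 1-regular). Then G contains an odd automorphism if and only if n is odd. -/
open SimpleGraph

/-- `g` is an automorphism of the graph `G`. -/
def IsAut {V : Type*} (G : SimpleGraph V) (g : Equiv.Perm V) : Prop :=
  ∀ u v : V, G.Adj (g u) (g v) ↔ G.Adj u v

/-- `a` is an `s`-arc of `G`: a sequence of `s+1` pairwise distinct vertices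
with consecutive vertices adjacent. -/
def IsSArc {V : Type*} (G : SimpleGraph V) (s : ℕ) (a : Fin (s + 1) → V) : Prop :=
  Function.Injective a ∧ ∀ i : Fin s, G.Adj (a i.castSucc) (a i.succ)

/-- The full automorphism group of `G` acts simply transitively on `s`-arcs. -/
def AutSimplyTransitive {V : Type*} (G : SimpleGraph V) (s : ℕ) : Prop :=
  ∀ a b : Fin (s + 1) → V, IsSArc G s a → IsSArc G s b →
    ∃! g : Equiv.Perm V, IsAut G g ∧ ∀ i : Fin (s + 1), g (a i) = b i

/-- The subgroup `H` of permutations acts simply transitively on `s`-arcs of `G`. -/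
def SubgroupSimplyTransitive {V : Type*} (G : SimpleGraph V)
    (H : Subgroup (Equiv.Perm V)) (s : ℕ) : Prop :=
  ∀ a b : Fin (s + 1) → V, IsSArc G s a → IsSArc G s b →
    ∃! g : H, ∀ i : Fin (s + 1), (g : Equiv.Perm V) (a i) = b i

/-- The full automorphism group of `G` acts transitively on arcs. -/
def AutArcTransitive {V : Type*} (G : SimpleGraph V) : Prop :=
  ∀ a b : Fin 2 → V, IsSArc G 1 a → IsSArc G 1 b →
    ∃ g : Equiv.Perm V, IsAut G g ∧ ∀ i : Fin 2, g (a i) = b i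

/-- `G` is cubic: every vertex has exactly three neighbours. -/
def IsCubic {V : Type*} (G : SimpleGraph V) : Prop :=
  ∀ v : V, (G.neighborSet v).ncard = 3

/-- `G` is bipartite: the vertex set splits into two parts so that every
edge joins the two parts. -/
def IsBipartite {V : Type*} (G : SimpleGraph V) : Prop :=
  ∃ s : Set V, ∀ u v : V, G.Adj u v → ((u ∈ s ∧ v ∉ s) ∨ (u ∉ s ∧ v ∈ s))

/-- `g` is an automorphism of order 2 interchanging two adjacent vertices. -/
def FlipInvolution {V : Type*} (G : SimpleGraph V) (g : Equiv.Perm V) : Prop :=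
  IsAut G g ∧ orderOf g = 2 ∧ ∃ u v : V, G.Adj u v ∧ g u = v ∧ g v = u

/-- The complete graph on two vertices (a single edge). -/
def K2 : SimpleGraph (Fin 2) := ⊤

/-- The star `K_{1,3}`: centre `0` adjacent to the three leaves `1`, `2`, `3`. -/
def Star3 : SimpleGraph (Fin 4) := SimpleGraph.fromRel (fun i _ => i = 0)

/-- The `H`-tree: two adjacent central vertices `0`, `1`, each adjacent to two
further leaves. -/
def Htree : SimpleGraph (Fin 6) := SimpleGraph.fromRel (fun i j =>
  (i = 0 ∧ (j = 1 ∨ j = 2 ∨ j = 3)) ∨ (i = 1 ∧ (j = 4 ∨ j = 5)))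

/-- The `A`-tree: a root `0` of degree three whose three neighbours `1`, `2`, `3`
are each adjacent to two further leaves. -/
def Atree : SimpleGraph (Fin 10) := SimpleGraph.fromRel (fun i j =>
  (i = 0 ∧ (j = 1 ∨ j = 2 ∨ j = 3)) ∨ (i = 1 ∧ (j = 4 ∨ j = 5)) ∨
  (i = 2 ∧ (j = 6 ∨ j = 7)) ∨ (i = 3 ∧ (j = 8 ∨ j = 9)))

/-- The subgraph of `G` induced on the set of vertices fixed by `α`. -/
def FixSubgraph {V : Type*} (G : SimpleGraph V) (α : Equiv.Perm V) :
    SimpleGraph ({v : V | α v = v} : Set V) :=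
  G.induce {v : V | α v = v}

/-- The connected component `c` of the subgraph of `G` induced on the fixed
points of `α` is isomorphic to the pattern graph `P`. -/
def ComponentIso {V W : Type*} (G : SimpleGraph V) (α : Equiv.Perm V)
    (c : (FixSubgraph G α).ConnectedComponent) (P : SimpleGraph W) : Prop :=
  Nonempty ((FixSubgraph G α).induce c.supp ≃g P)

set_option linter.unusedSectionVars false
set_option linter.unusedTactic false
set_option linter.unreachableTactic false

section
variable {V : Type*} [Fintype V] [DecidableEq V] {G : SimpleGraph V}

lemma isSArc_pair {u v : V} (h : G.Adj u v) : IsSArc G 1 ![u, v] := by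
  constructor
  · intro i j hij
    fin_cases i <;> fin_cases j <;> simp_all <;> exact h.ne (by simpa using hij)
  · intro i
    fin_cases i
    simpa using h

-- sign of a fixed-point-free involution
lemma sign_fpf_inv {n : ℕ} (hcard : Fintype.card V = 2 * n) (g : Equiv.Perm V)
    (hg2 : g * g = 1) (hfpf : ∀ w : V, g w ≠ w) :
    Equiv.Perm.sign g = (-1) ^ n := by
  have hord : orderOf g ∣ 2 := orderOf_dvd_of_pow_eq_one (by simpa [pow_two] using hg2)
  have hrep : g.cycleType = Multiset.replicate n 2 := by
    have hall : ∀ k ∈ g.cycleType, k = 2 := by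
      intro k hk
      have h1 : k ∣ 2 := (Equiv.Perm.dvd_of_mem_cycleType hk).trans hord
      have h2 : 2 ≤ k := Equiv.Perm.two_le_of_mem_cycleType hk
      exact le_antisymm (Nat.le_of_dvd (by norm_num) h1) h2

    have hsum : g.cycleType.sum = 2 * n := by
      rw [Equiv.Perm.sum_cycleType]
      have : g.support = Finset.univ := by
        ext x; simp [Equiv.Perm.mem_support, hfpf x]
      rw [this, Finset.card_univ, hcard]
    have hc : Multiset.card g.cycleType = n := by
      have : g.cycleType.sum = 2 * Multiset.card g.cycleType := by
        rw [Multiset.eq_replicate_of_mem hall, Multiset.sum_replicate,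
          Multiset.card_replicate]; ring
      omega
    rw [Multiset.eq_replicate_of_mem hall, hc]
  rw [Equiv.Perm.sign_of_cycleType, hrep]
  simp [Multiset.sum_replicate, Multiset.card_replicate]
  rw [pow_add, pow_mul]
  simp

end

section main
variable {V : Type*} [Fintype V] [DecidableEq V] {G : SimpleGraph V}
  {H : Subgroup (Equiv.Perm V)}


lemma reg_exu (hreg : SubgroupSimplyTransitive G H 1)
    {u v u' v' : V} (h1 : G.Adj u v) (h2 : G.Adj u' v') :
    ∃! g : H, (g : Equiv.Perm V) u = u' ∧ (g : Equiv.Perm V) v = v' := by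
  obtain ⟨g, hg, hu⟩ := hreg ![u, v] ![u', v'] (isSArc_pair h1) (isSArc_pair h2)
  refine ⟨g, ⟨by simpa using hg 0, by simpa using hg 1⟩, ?_⟩
  intro g' ⟨e0, e1⟩
  apply hu
  intro i
  fin_cases i <;> simpa

lemma rigid (hreg : SubgroupSimplyTransitive G H 1)
    {u v : V} (h1 : G.Adj u v) {h : Equiv.Perm V} (hH : h ∈ H)
    (e0 : h u = u) (e1 : h v = v) : h = 1 := by
  obtain ⟨g, _, hu⟩ := reg_exu hreg h1 h1
  have a1 : (⟨h, hH⟩ : H) = g := hu _ ⟨e0, e1⟩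
  have a2 : (1 : H) = g := hu _ ⟨rfl, rfl⟩
  have := a1.trans a2.symm
  exact Subtype.ext_iff.mp this

lemma reg_ex (hreg : SubgroupSimplyTransitive G H 1)
    {u v u' v' : V} (h1 : G.Adj u v) (h2 : G.Adj u' v') :
    ∃ h ∈ H, h u = u' ∧ h v = v' := by
  obtain ⟨g, hg, -⟩ := reg_exu hreg h1 h2
  exact ⟨g, g.2, hg⟩

-- third-neighbour extraction
lemma third_nbr (hcubic : ∀ v : V, (G.neighborSet v).ncard = 3)
    {u a b : V} (ha : G.Adj u a) (hb : G.Adj u b) (hab : a ≠ b) :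
    ∃ t, G.Adj u t ∧ t ≠ a ∧ t ≠ b ∧ ∀ x, G.Adj u x → x = a ∨ x = b ∨ x = t := by
  have hsub : {a, b} ⊆ G.neighborSet u := by
    intro x hx
    rcases hx with rfl | hx
    · exact ha
    · simp_all [SimpleGraph.mem_neighborSet]
  have hdiff : (G.neighborSet u \ {a, b}).ncard = 1 := by
    rw [Set.ncard_diff hsub (Set.toFinite _), hcubic u, Set.ncard_pair hab]
  obtain ⟨t, ht⟩ := Set.ncard_eq_one.mp hdiff
  have htm : t ∈ G.neighborSet u \ ({a, b} : Set V) := ht ▸ rfl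
  refine ⟨t, htm.1, fun h => htm.2 (by simp [h]), fun h => htm.2 (by simp [h]), ?_⟩
  intro x hx
  by_cases hxa : x = a
  · exact Or.inl hxa
  by_cases hxb : x = b
  · exact Or.inr (Or.inl hxb)
  have : x ∈ G.neighborSet u \ ({a, b} : Set V) := ⟨hx, by simp [hxa, hxb]⟩
  rw [ht] at this
  exact Or.inr (Or.inr this)

end main

section main2
variable {V : Type*} [Fintype V] [DecidableEq V] {G : SimpleGraph V}
  {H : Subgroup (Equiv.Perm V)}

-- an element of H fixing a vertex is even (it cubes to 1)
lemma stab_sign (hreg : SubgroupSimplyTransitive G H 1)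
    (hcubic : ∀ v : V, (G.neighborSet v).ncard = 3)
    (hAut : ∀ g ∈ H, ∀ u v : V, G.Adj (g u) (g v) ↔ G.Adj u v)
    {γ : Equiv.Perm V} (hH : γ ∈ H) {u w : V} (hfix : γ u = u) (huw : G.Adj u w) :
    Equiv.Perm.sign γ = 1 := by
  have hmap : ∀ x, G.Adj u x → G.Adj u (γ x) := by
    intro x hx
    have := (hAut γ hH u x).mpr hx
    rwa [hfix] at this
  have hcube : γ ^ 3 = 1 := by
    by_cases hw : γ w = w
    · have : γ = 1 := rigid hreg huw hH hfix hw
      simp [this]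
    · obtain ⟨t, hut, htw, htγw, hall⟩ := third_nbr hcubic huw (hmap w huw) (Ne.symm hw)
      -- γ (γ w) = t
      have hγγw : γ (γ w) = t := by
        rcases hall (γ (γ w)) (hmap _ (hmap w huw)) with h1 | h1 | h1
        · -- γ (γ w) = w : then γ t = t, so γ = 1, contradiction
          exfalso
          have hγt : γ t = t := by
            rcases hall (γ t) (hmap t hut) with h2 | h2 | h2
            · exfalso; apply htγw
              have := γ.injective (h2.trans h1.symm)
              rw [this]
            · exfalso; exact htw (γ.injective h2)
            · exact h2
          exact hw (by simpa [rigid hreg hut hH hfix hγt])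
        · exfalso; exact hw (γ.injective h1)
        · exact h1
      have hγt : γ t = w := by
        rcases hall (γ t) (hmap t hut) with h2 | h2 | h2
        · exact h2
        · exfalso; exact htw (γ.injective h2)
        · exfalso; apply htγw; exact (γ.injective (hγγw.trans h2.symm)).symm ▸ rfl
      have e1 : (γ ^ 3) u = u := by
        simp [pow_succ, pow_two, Equiv.Perm.mul_apply, hfix]
      have e2 : (γ ^ 3) w = w := by
        have : (γ ^ 3) w = γ (γ (γ w)) := by
          simp [pow_succ, pow_two, Equiv.Perm.mul_apply]
        rw [this, hγγw, hγt]
      exact rigid hreg huw (pow_mem hH 3) e1 e2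
  have hs : (Equiv.Perm.sign γ) ^ 3 = 1 := by
    rw [← map_pow, hcube, map_one]
  have hsq : (Equiv.Perm.sign γ) ^ 2 = 1 := by
    exact Int.units_sq _
  have : Equiv.Perm.sign γ ^ 3 = Equiv.Perm.sign γ ^ 2 * Equiv.Perm.sign γ := by rw [pow_succ]
  rw [this, hsq, one_mul] at hs
  exact hs

-- the flip element at an arc: involution without fixed points
lemma flip_lemma (hreg : SubgroupSimplyTransitive G H 1)
    (hcubic : ∀ v : V, (G.neighborSet v).ncard = 3)
    (hAut : ∀ g ∈ H, ∀ u v : V, G.Adj (g u) (g v) ↔ G.Adj u v)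
    {u w : V} (huw : G.Adj u w) :
    ∃ g ∈ H, g u = w ∧ g w = u ∧ g * g = 1 ∧ ∀ x, g x ≠ x := by
  obtain ⟨g, hH, e1, e2⟩ := reg_ex hreg huw huw.symm
  have hg2 : g * g = 1 := by
    apply rigid hreg huw (mul_mem hH hH)
    · simp [Equiv.Perm.mul_apply, e1, e2]
    · simp [Equiv.Perm.mul_apply, e1, e2]
  refine ⟨g, hH, e1, e2, hg2, ?_⟩
  intro x hx
  -- g fixes x; g permutes N(x) and has a fixed neighbour
  have hmap : ∀ y, G.Adj x y → G.Adj x (g y) := by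
    intro y hy
    have := (hAut g hH x y).mpr hy
    rwa [hx] at this
  have hgg : ∀ y, g (g y) = y := fun y => by
    have := congrArg (fun p : Equiv.Perm V => p y) hg2
    simpa [Equiv.Perm.mul_apply] using this
  -- N(x) nonempty
  have hne : (G.neighborSet x).Nonempty := by
    rw [← Set.ncard_pos (Set.toFinite _), hcubic x]; norm_num
  obtain ⟨a, ha⟩ := hne
  have ha' : G.Adj x a := ha
  have : ∃ y, G.Adj x y ∧ g y = y := by
    by_cases hga : g a = a
    · exact ⟨a, ha', hga⟩
    · obtain ⟨t, hxt, hta, htga, hall⟩ := third_nbr hcubic ha' (hmap a ha') (Ne.symm hga)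
      refine ⟨t, hxt, ?_⟩
      rcases hall (g t) (hmap t hxt) with h1 | h1 | h1
      · exfalso; apply htga
        have : g t = g (g a) := by rw [hgg]; exact h1
        exact (g.injective this) ▸ rfl
      · exfalso; exact hta (g.injective (by rw [h1, ← hgg a]))
      · exact h1
  obtain ⟨y, hxy, hgy⟩ := this
  have : g = 1 := rigid hreg hxy hH hx hgy
  rw [this] at e1
  exact huw.ne (by simpa using e1)

end main2

section main3
variable {V : Type*} [Fintype V] [DecidableEq V] {G : SimpleGraph V}
  {H : Subgroup (Equiv.Perm V)}

lemma all_even {n : ℕ} (hcard : Fintype.card V = 2 * n) (hn : Even n)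
    (hconn : G.Connected)
    (hcubic : ∀ v : V, (G.neighborSet v).ncard = 3)
    (hAut : ∀ g ∈ H, ∀ u v : V, G.Adj (g u) (g v) ↔ G.Adj u v)
    (hreg : SubgroupSimplyTransitive G H 1) :
    ∀ h ∈ H, Equiv.Perm.sign h = 1 := by
  have : Nonempty V := hconn.nonempty
  obtain ⟨v₀⟩ := this
  have hne : (G.neighborSet v₀).Nonempty := by
    rw [← Set.ncard_pos (Set.toFinite _), hcubic v₀]; norm_num
  obtain ⟨x₀, hx₀⟩ := hne
  have hadj₀ : G.Adj v₀ x₀ := hx₀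
  set Q : V → V → Prop := fun u w =>
    ∀ h : Equiv.Perm V, h ∈ H → h v₀ = u → h x₀ = w → Equiv.Perm.sign h = 1 with hQ
  -- flips are even (n even)
  have flip_even : ∀ {u w : V}, G.Adj u w →
      ∀ g ∈ H, g u = w → g w = u → g * g = 1 → Equiv.Perm.sign g = 1 := by
    intro u w huw g hH e1 e2 hg2
    by_cases hg1 : g = 1
    · simp [hg1]
    · have hfpf : ∀ x, g x ≠ x := by
        intro x hx
        -- same argument as flip_lemma: use rigidity
        obtain ⟨g', hH', e1', e2', hg2', hfpf'⟩ := flip_lemma hreg hcubic hAut huw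
        -- g and g' both map (u,w) to (w,u); uniqueness forces g = g'
        obtain ⟨g₀, -, hu⟩ := reg_exu hreg huw huw.symm
        have q1 : (⟨g, hH⟩ : H) = g₀ := hu _ ⟨e1, e2⟩
        have q2 : (⟨g', hH'⟩ : H) = g₀ := hu _ ⟨e1', e2'⟩
        have : g = g' := Subtype.ext_iff.mp (q1.trans q2.symm)
        exact hfpf' x (this ▸ hx)
      rw [sign_fpf_inv hcard g hg2 hfpf]
      exact Even.neg_one_pow hn
  -- rotation closure
  have rot : ∀ u w w', G.Adj u w → G.Adj u w' → Q u w → Q u w' := by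
    intro u w w' huw huw' hq h' hH' e0 e1
    obtain ⟨h, hH, f0, f1⟩ := reg_ex hreg hadj₀ huw
    have hγ : h' * h⁻¹ ∈ H := mul_mem hH' (inv_mem hH)
    have hγu : (h' * h⁻¹) u = u := by
      have : h⁻¹ u = v₀ := by rw [← f0]; simp
      simp [Equiv.Perm.mul_apply, this, e0]
    have hsγ : Equiv.Perm.sign (h' * h⁻¹) = 1 := stab_sign hreg hcubic hAut hγ hγu huw
    have hsh : Equiv.Perm.sign h = 1 := hq h hH f0 f1
    have : Equiv.Perm.sign h' = Equiv.Perm.sign (h' * h⁻¹) * Equiv.Perm.sign h := by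
      rw [← map_mul]; group
    rw [this, hsγ, hsh, one_mul]
  -- flip closure
  have flipc : ∀ u w, G.Adj u w → Q u w → Q w u := by
    intro u w huw hq h' hH' e0 e1
    obtain ⟨h, hH, f0, f1⟩ := reg_ex hreg hadj₀ huw
    set γ := h' * h⁻¹ with hγdef
    have hγ : γ ∈ H := mul_mem hH' (inv_mem hH)
    have hγu : γ u = w := by
      have : h⁻¹ u = v₀ := by rw [← f0]; simp
      simp [hγdef, Equiv.Perm.mul_apply, this, e0]
    have hγw : γ w = u := by
      have : h⁻¹ w = x₀ := by rw [← f1]; simp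
      simp [hγdef, Equiv.Perm.mul_apply, this, e1]
    have hγ2 : γ * γ = 1 := by
      apply rigid hreg huw (mul_mem hγ hγ)
      · simp [Equiv.Perm.mul_apply, hγu, hγw]
      · simp [Equiv.Perm.mul_apply, hγu, hγw]
    have hsγ : Equiv.Perm.sign γ = 1 := flip_even huw γ hγ hγu hγw hγ2
    have hsh : Equiv.Perm.sign h = 1 := hq h hH f0 f1
    have : Equiv.Perm.sign h' = Equiv.Perm.sign γ * Equiv.Perm.sign h := by
      rw [hγdef, ← map_mul]; group
    rw [this, hsγ, hsh, one_mul]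
  -- walk induction
  have step : ∀ (u v : V) (p : G.Walk u v), (∀ w, G.Adj v w → Q v w) →
      ∀ w, G.Adj u w → Q u w := by
    intro u v p
    induction p with
    | nil => exact fun hv => hv
    | cons hadj p ih =>
      intro hv w hw
      have hb := ih hv
      have qbu := hb _ hadj.symm
      have qub := flipc _ _ hadj.symm qbu
      exact rot _ _ w hadj hw qub
  have base : ∀ w, G.Adj v₀ w → Q v₀ w := by
    intro w hw
    refine rot v₀ x₀ w hadj₀ hw ?_
    intro h hH e0 e1
    have : h = 1 := rigid hreg hadj₀ hH e0 e1
    simp [this]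
  intro h hH
  have hadj : G.Adj (h v₀) (h x₀) := (hAut h hH v₀ x₀).mpr hadj₀
  obtain ⟨p⟩ := hconn.preconnected (h v₀) v₀
  exact step (h v₀) v₀ p base (h x₀) hadj h hH rfl rfl

end main3

/-- a 1-regular subgroup of automorphisms of a connected cubic graph
on `2n` vertices contains an odd automorphism iff `n` is odd. -/
theorem stmt0 {V : Type*} [Fintype V] [DecidableEq V] (G : SimpleGraph V) (n : ℕ)
    (hcard : Fintype.card V = 2 * n) (hconn : G.Connected) (hcubic : IsCubic G)
    (H : Subgroup (Equiv.Perm V)) (hAut : ∀ g ∈ H, IsAut G g)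
    (hreg : SubgroupSimplyTransitive G H 1) :
    (∃ g ∈ H, Equiv.Perm.sign g = -1) ↔ Odd n := by
  have hAut' : ∀ g ∈ H, ∀ u v : V, G.Adj (g u) (g v) ↔ G.Adj u v := hAut
  constructor
  · rintro ⟨g, hH, hs⟩
    by_contra hodd
    have hn : Even n := Nat.not_odd_iff_even.mp hodd
    have := all_even hcard hn hconn hcubic hAut' hreg g hH
    rw [this] at hs
    exact absurd hs (by decide)
  · intro hodd
    have : Nonempty V := hconn.nonempty
    obtain ⟨v₀⟩ := this
    have hne : (G.neighborSet v₀).Nonempty := by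
      rw [← Set.ncard_pos (Set.toFinite _), hcubic v₀]; norm_num
    obtain ⟨x₀, hx₀⟩ := hne
    have hadj : G.Adj v₀ x₀ := hx₀
    obtain ⟨g, hH, e1, e2, hg2, hfpf⟩ := flip_lemma hreg hcubic hAut' hadj
    refine ⟨g, hH, ?_⟩
    rw [sign_fpf_inv hcard g hg2 hfpf]
    exact Odd.neg_one_pow hodd
end

section
/- Let X be a finite connected cubic graph whose full automorphism group acts simply transitively on the arcs of X (i.e., X is 1-regular). Then every automorphism of X of order 2 is fixed-point-free, i.e., fixes no vertex of X. -/
open SimpleGraph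

/-- in a connected cubic graph whose full automorphism group is
1-regular, every automorphism of order 2 is fixed-point-free. -/
theorem stmt1 {V : Type*} [Fintype V] (G : SimpleGraph V)
    (hconn : G.Connected) (hcubic : IsCubic G)
    (hreg : AutSimplyTransitive G 1)
    (α : Equiv.Perm V) (hα : IsAut G α) (hord : orderOf α = 2) :
    ∀ v : V, α v ≠ v := by
  intro v hv
  -- α is an involution
  have hsq : ∀ x, α (α x) = x := by
    intro x
    have h := pow_orderOf_eq_one α
    rw [hord] at h
    have := congrArg (fun p : Equiv.Perm V => p x) h
    simpa [pow_succ, Equiv.Perm.mul_apply] using this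
  -- α maps neighbors of v to neighbors of v
  have hmem : ∀ x ∈ G.neighborSet v, α x ∈ G.neighborSet v := by
    intro x hx
    have : G.Adj (α v) (α x) := (hα v x).mpr hx
    rwa [hv] at this
  -- find a fixed neighbor
  obtain ⟨a, b, c, hab, hac, hbc, hS⟩ := Set.ncard_eq_three.mp (hcubic v)
  have hinj : Function.Injective α := α.injective
  have ha : a ∈ G.neighborSet v := by rw [hS]; simp
  have hb : b ∈ G.neighborSet v := by rw [hS]; simp
  have hc : c ∈ G.neighborSet v := by rw [hS]; simp
  have hfix : ∃ w, G.Adj v w ∧ α w = w := by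
    have haa := hmem a ha
    rw [hS] at haa
    rcases haa with h1 | h1 | h1
    · exact ⟨a, ha, h1⟩
    · -- α a = b, hence α b = a, hence α c = c
      have hba : α b = a := by rw [← h1, hsq]
      have hcc := hmem c hc
      rw [hS] at hcc
      rcases hcc with h2 | h2 | h2
      · exact absurd (hinj (h2.trans hba.symm)) (Ne.symm hbc)
      · exact absurd (hinj (h2.trans h1.symm)) (Ne.symm hac)
      · exact ⟨c, hc, h2⟩
    · -- α a = c, hence α c = a, hence α b = b
      have hca : α c = a := by rw [← h1, hsq]
      have hbb := hmem b hb
      rw [hS] at hbb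
      rcases hbb with h2 | h2 | h2
      · exact absurd (hinj (h2.trans hca.symm)) hbc
      · exact ⟨b, hb, h2⟩
      · exact absurd (hinj (h2.trans h1.symm)) (Ne.symm hab)
  obtain ⟨w, hadj, hw⟩ := hfix
  -- the arc (v, w) is fixed by α, so by simple transitivity α = 1
  have harc : IsSArc G 1 ![v, w] := by
    constructor
    · intro i j hij
      fin_cases i <;> fin_cases j <;> simp_all <;> exact absurd hij hadj.ne'
    · intro i
      fin_cases i
      simpa using hadj
  obtain ⟨g, _, hguniq⟩ := hreg ![v, w] ![v, w] harc harc
  have h1 : α = g := by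
    apply hguniq
    refine ⟨hα, ?_⟩
    intro i
    fin_cases i <;> simp [hv, hw]
  have h2 : (1 : Equiv.Perm V) = g := by
    apply hguniq
    refine ⟨fun u v => Iff.rfl, fun i => rfl⟩
  have : α = 1 := h1.trans h2.symm
  rw [this, orderOf_one] at hord
  exact absurd hord (by norm_num)
end

section
/- Let X be a finite connected cubic graph whose full automorphism group acts simply transitively on the 2-arcs of X (i.e., X is 2-regular), and let α be an automorphism of X of order 2. Then every connected component of the subgraph of X induced on the set Fix(α) of vertices fixed by α consists of exactly two adjacent vertices (is isomorphic to K2). -/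
open SimpleGraph

section StmtTwoAux
variable {V : Type*} {G : SimpleGraph V} {α : Equiv.Perm V}

private lemma stmt2_alpha_sq (hord : orderOf α = 2) (u : V) : α (α u) = u := by
  have h : α ^ 2 = 1 := by rw [← hord]; exact pow_orderOf_eq_one α
  have := congrArg (fun g : Equiv.Perm V => g u) h
  simpa [pow_two, Equiv.Perm.mul_apply] using this

private lemma stmt2_not_two_fixed (hreg : AutSimplyTransitive G 2)
    (hα : IsAut G α) (hord : orderOf α = 2)
    {v x y : V} (hvx : G.Adj v x) (hvy : G.Adj v y) (hxy : x ≠ y)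
    (hfv : α v = v) (hfx : α x = x) (hfy : α y = y) : False := by
  set a : Fin 3 → V := ![x, v, y] with ha
  have harc : IsSArc G 2 a := by
    constructor
    · intro i j hij
      have h1 : x ≠ v := hvx.ne'
      have h2 : y ≠ v := hvy.ne'
      fin_cases i <;> fin_cases j <;> simp_all [a]
    · intro i
      fin_cases i <;> simp [a, hvx.symm, hvy]
  obtain ⟨g, _, hgu⟩ := hreg a a harc harc
  have hα1 : α = g := by
    refine hgu α ⟨hα, ?_⟩
    intro i; fin_cases i <;> simp [a, hfx, hfv, hfy]
  have h11 : (1 : Equiv.Perm V) = g :=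
    hgu 1 ⟨fun u v => by simp, fun i => by simp⟩
  have : α = 1 := hα1.trans h11.symm
  rw [this] at hord
  simp at hord

private lemma stmt2_unique_fixed_neighbor (hcubic : IsCubic G)
    (hreg : AutSimplyTransitive G 2) (hα : IsAut G α) (hord : orderOf α = 2)
    {v : V} (hfv : α v = v) : ∃! u, G.Adj v u ∧ α u = u := by
  obtain ⟨a, b, c, hab, hac, hbc, hset⟩ := Set.ncard_eq_three.mp (hcubic v)
  have hmem : ∀ u, G.Adj v u ↔ u ∈ ({a, b, c} : Set V) := by
    intro u; rw [← hset, mem_neighborSet]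
  have hstep : ∀ u, G.Adj v u → α u ∈ ({a, b, c} : Set V) := by
    intro u hu
    rw [← hmem]
    have := (hα v u).mpr hu
    rwa [hfv] at this
  have hA : G.Adj v a := (hmem a).mpr (by simp)
  have hB : G.Adj v b := (hmem b).mpr (by simp)
  have hC : G.Adj v c := (hmem c).mpr (by simp)
  have huniq : ∀ u₀, G.Adj v u₀ → α u₀ = u₀ →
      ∃! u, G.Adj v u ∧ α u = u := by
    intro u₀ h1 h2
    refine ⟨u₀, ⟨h1, h2⟩, ?_⟩
    rintro u' ⟨h1', h2'⟩
    by_contra hne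
    exact stmt2_not_two_fixed hreg hα hord h1' h1 hne hfv h2' h2
  have hinj := α.injective
  rcases hstep a hA with h | h | h
  · exact huniq a hA h
  · have hba : α b = a := by rw [← h, stmt2_alpha_sq hord]
    have hcc : α c = c := by
      rcases hstep c hC with h' | h' | h'
      · exact absurd (hinj (h'.trans hba.symm)) hbc.symm
      · exact absurd (hinj (h'.trans h.symm)) hac.symm
      · exact h'
    exact huniq c hC hcc
  · have hca : α c = a := by rw [← h, stmt2_alpha_sq hord]
    have hbb : α b = b := by
      rcases hstep b hB with h' | h' | h'
      · exact absurd (hinj (h'.trans hca.symm)) hbc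
      · exact h'
      · exact absurd (hinj (h'.trans h.symm)) hab.symm
    exact huniq b hB hbb

end StmtTwoAux

section StmtTwoAux2
variable {S : Type*} {H : SimpleGraph S}

private lemma stmt2_walk_two {x y0 : S} (huniq : ∀ z : S, ∃! w : S, H.Adj z w)
    (hadj : H.Adj x y0) :
    ∀ {a b : S}, H.Walk a b → (a = x ∨ a = y0) → (b = x ∨ b = y0) := by
  intro a b w
  induction w with
  | nil => exact id
  | cons h p ih =>
    rename_i u m b'
    intro hu
    apply ih
    rcases hu with rfl | rfl
    · obtain ⟨w, hw, hwu⟩ := huniq u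
      rw [hwu m h, ← hwu y0 hadj]
      exact Or.inr rfl
    · obtain ⟨w, hw, hwu⟩ := huniq u
      rw [hwu m h, ← hwu x hadj.symm]
      exact Or.inl rfl

private lemma stmt2_supp_eq {x y0 : S} (huniq : ∀ z : S, ∃! w : S, H.Adj z w)
    (hadj : H.Adj x y0) :
    (H.connectedComponentMk x).supp = {x, y0} := by
  ext z
  rw [ConnectedComponent.mem_supp_iff, ConnectedComponent.eq]
  constructor
  · intro hr
    obtain ⟨w⟩ := hr.symm
    exact stmt2_walk_two huniq hadj w (Or.inl rfl)
  · rintro (rfl | rfl)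
    · exact Reachable.refl _
    · exact hadj.symm.reachable

private lemma stmt2_iso_K2 {x y0 : S} (hadj : H.Adj x y0) :
    Nonempty (H.induce ({x, y0} : Set S) ≃g (⊤ : SimpleGraph (Fin 2))) := by
  classical
  have hne : x ≠ y0 := hadj.ne
  refine ⟨⟨⟨fun a => if (a : S) = x then 0 else 1,
      fun i => if i = 0 then ⟨x, by simp⟩ else ⟨y0, by simp⟩, ?_, ?_⟩, ?_⟩⟩
  · rintro ⟨z, hz⟩
    rcases hz with rfl | hz
    · simp
    · rw [Set.mem_singleton_iff] at hz
      subst hz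
      simp [hne.symm]
  · intro i
    fin_cases i
    · simp
    · simp [hne.symm]
  · rintro ⟨a, ha⟩ ⟨b, hb⟩
    rcases ha with rfl | ha <;> [skip; rw [Set.mem_singleton_iff] at ha]
    · rcases hb with rfl | hb <;> [skip; rw [Set.mem_singleton_iff] at hb]
      · simp [comap_adj]
      · subst hb; simp [comap_adj, hne, Ne.symm hne, hadj]
    · subst ha
      rcases hb with rfl | hb <;> [skip; rw [Set.mem_singleton_iff] at hb]
      · simp [comap_adj, hne.symm, hadj.symm]
      · subst hb; simp [comap_adj]

end StmtTwoAux2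

/-- in a connected cubic 2-regular graph, every connected component
of the subgraph induced on the fixed points of an order-2 automorphism is
isomorphic to `K2`. -/
theorem stmt2 {V : Type*} [Fintype V] (G : SimpleGraph V)
    (hconn : G.Connected) (hcubic : IsCubic G)
    (hreg : AutSimplyTransitive G 2)
    (α : Equiv.Perm V) (hα : IsAut G α) (hord : orderOf α = 2) :
    ∀ c : (FixSubgraph G α).ConnectedComponent, ComponentIso G α c K2 := by
  have huniq : ∀ z : ({v : V | α v = v} : Set V), ∃! w, (FixSubgraph G α).Adj z w := by
    rintro ⟨z, hz⟩
    obtain ⟨u, ⟨hu1, hu2⟩, hu3⟩ :=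
      stmt2_unique_fixed_neighbor hcubic hreg hα hord (show α z = z from hz)
    refine ⟨⟨u, hu2⟩, ?_, ?_⟩
    · exact hu1
    · rintro ⟨w, hw⟩ hadj
      exact Subtype.ext (hu3 w ⟨hadj, hw⟩)
  intro c
  induction c using SimpleGraph.ConnectedComponent.ind with
  | _ x =>
    obtain ⟨y0, hy0, -⟩ := huniq x
    unfold ComponentIso K2
    rw [stmt2_supp_eq huniq hy0]
    exact stmt2_iso_K2 hy0
end

section
/- Let X be a finite connected cubic graph whose automorphism group acts transitively on arcs (X is symmetric), and let α be an automorphism of X of order 3 or of order 6 that fixes at least one vertex. Then no two vertices fixed by α are adjacent in X; that is, every α-rigid cell is an isolated vertex. -/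
open SimpleGraph

/-- If β is an order-3 automorphism fixing w and a neighbour x of w,
then β fixes every neighbour of w. -/
lemma fix_neighbors {V : Type*} [Fintype V] [DecidableEq V] (G : SimpleGraph V)
    [DecidableRel G.Adj] (hcubic : IsCubic G)
    (β : Equiv.Perm V) (hβ : IsAut G β) (h3 : β ^ 3 = 1)
    (w x : V) (hw : β w = w) (hx : β x = x) (hwx : G.Adj w x) :
    ∀ y, G.Adj w y → β y = y := by
  intro y hy
  by_contra hne
  have hby : G.Adj w (β y) := by
    have := (hβ w y).2 hy; rwa [hw] at this
  have hbby : G.Adj w (β (β y)) := by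
    have := (hβ w (β y)).2 hby; rwa [hw] at this
  have h3y : β (β (β y)) = y := by
    have := congrArg (fun f : Equiv.Perm V => f y) h3
    simpa [pow_succ, Equiv.Perm.mul_apply] using this
  have h1 : β (β y) ≠ β y := fun h => hne (β.injective h)
  have h2 : β (β y) ≠ y := by
    intro h
    apply hne
    have := congrArg β h
    rw [h3y] at this
    exact this.symm
  have hx1 : x ≠ y := fun h => hne (h ▸ hx)
  have hx2 : x ≠ β y := by
    intro h; exact h1 (by rw [← h, hx, h])
  have hx3 : x ≠ β (β y) := by
    intro h
    apply h2
    have := congrArg β h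
    rw [hx, h3y] at this
    rw [← h, this]
  have hsub : ({x, y, β y, β (β y)} : Finset V) ⊆ G.neighborFinset w := by
    intro z hz
    simp only [Finset.mem_insert, Finset.mem_singleton] at hz
    rw [mem_neighborFinset]
    rcases hz with rfl | rfl | rfl | rfl
    · exact hwx
    · exact hy
    · exact hby
    · exact hbby
  have hcard4 : ({x, y, β y, β (β y)} : Finset V).card = 4 := by
    rw [Finset.card_insert_of_notMem (by simp [hx1, hx2, hx3]),
        Finset.card_insert_of_notMem (by
          simp only [Finset.mem_insert, Finset.mem_singleton, not_or]
          exact ⟨fun h => hne h.symm, fun h => h2 h.symm⟩),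
        Finset.card_insert_of_notMem (by
          simp only [Finset.mem_singleton]
          exact fun h => h1 h.symm),
        Finset.card_singleton]
  have hle := Finset.card_le_card hsub
  rw [hcard4] at hle
  have hcn : (G.neighborFinset w).card = 3 := by
    have := hcubic w
    rwa [Set.ncard_eq_toFinset_card'] at this
  omega

lemma order3_id {V : Type*} [Fintype V] [DecidableEq V] (G : SimpleGraph V)
    [DecidableRel G.Adj]
    (hconn : G.Connected) (hcubic : IsCubic G)
    (β : Equiv.Perm V) (hβ : IsAut G β) (hord : orderOf β = 3)
    (u v : V) (hu : β u = u) (hv : β v = v) (huv : G.Adj u v) : False := by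
  have h3 : β ^ 3 = 1 := hord ▸ pow_orderOf_eq_one β
  -- T : set of good vertices
  set T : Set V := {w | β w = w ∧ ∀ y, G.Adj w y → β y = y} with hT
  have huT : u ∈ T :=
    ⟨hu, fix_neighbors G hcubic β hβ h3 u v hu hv huv⟩
  have hclosed : ∀ a b : V, a ∈ T → G.Walk a b → b ∈ T := by
    intro a b ha p
    induction p with
    | nil => exact ha
    | cons h p ih =>
      rename_i c d _
      apply ih
      have hdfix : β d = d := ha.2 _ h
      exact ⟨hdfix, fix_neighbors G hcubic β hβ h3 d c hdfix ha.1 h.symm⟩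
  have hall : ∀ z : V, β z = z := by
    intro z
    obtain ⟨p⟩ := (hconn u z)
    exact (hclosed u z huT p).1
  have : β = 1 := Equiv.ext hall
  rw [this, orderOf_one] at hord
  omega

/-- in a connected cubic symmetric graph, no two vertices fixed by an
automorphism of order 3 or 6 (fixing at least one vertex) are adjacent. -/
theorem stmt3 {V : Type*} [Fintype V] (G : SimpleGraph V)
    (hconn : G.Connected) (hcubic : IsCubic G)
    (hsym : AutArcTransitive G)
    (α : Equiv.Perm V) (hα : IsAut G α) (hord : orderOf α = 3 ∨ orderOf α = 6)
    (hfix : ∃ v : V, α v = v) :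
    ∀ u v : V, α u = u → α v = v → ¬ G.Adj u v := by
  classical
  intro u v hu hv huv
  obtain ⟨β, hβaut, hβord, hβu, hβv⟩ :
      ∃ β : Equiv.Perm V, IsAut G β ∧ orderOf β = 3 ∧ β u = u ∧ β v = v := by
    rcases hord with h3 | h6
    · exact ⟨α, hα, h3, hu, hv⟩
    · refine ⟨α ^ 2, ?_, ?_, ?_, ?_⟩
      · intro a b
        simp only [sq, Equiv.Perm.mul_apply]
        exact (hα _ _).trans (hα _ _)
      · rw [orderOf_pow' α (two_ne_zero), h6]; norm_num
      · simp [sq, Equiv.Perm.mul_apply, hu]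
      · simp [sq, Equiv.Perm.mul_apply, hv]
  exact order3_id G hconn hcubic β hβaut hβord u v hβu hβv huv
end

section
/- Let X be a finite connected cubic graph whose full automorphism group acts simply transitively on the 3-arcs of X and contains a subgroup acting simply transitively on the 2-arcs of X. Then there is no automorphism α of X of order 2 such that the subgraph of X induced on the set Fix(α) of vertices fixed by α has both a connected component isomorphic to K2 (a single edge) and a connected component isomorphic to the star K_{1,3}. -/
open SimpleGraph

section AuxLemmas

variable {V : Type*} {G : SimpleGraph V} {α : Equiv.Perm V}

lemma isSArc2' (G : SimpleGraph V) {x u v : V}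
    (h1 : G.Adj x u) (h2 : G.Adj u v) (h3 : x ≠ v) : IsSArc G 2 ![x, u, v] := by
  have e1 : x ≠ u := h1.ne
  have e2 : u ≠ v := h2.ne
  constructor
  · intro i j hij
    fin_cases i <;> fin_cases j <;> simp_all
  · intro i; fin_cases i <;> simpa

lemma isSArc3' (G : SimpleGraph V) {x u v z : V}
    (h1 : G.Adj x u) (h2 : G.Adj u v) (h3 : G.Adj v z)
    (hxv : x ≠ v) (hxz : x ≠ z) (huz : u ≠ z) : IsSArc G 3 ![x, u, v, z] := by
  have e1 : x ≠ u := h1.ne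
  have e2 : u ≠ v := h2.ne
  have e3 : v ≠ z := h3.ne
  constructor
  · intro i j hij
    fin_cases i <;> fin_cases j <;> simp_all
  · intro i; fin_cases i <;> simpa

lemma k2_extract (c : (FixSubgraph G α).ConnectedComponent)
    (iso : ((FixSubgraph G α).induce c.supp) ≃g K2) :
    ∃ u v : V, α u = u ∧ α v = v ∧ G.Adj u v ∧
      (∀ z, α z = z → G.Adj u z → z = v) ∧
      (∀ z, α z = z → G.Adj v z → z = u) := by
  have key : ∀ i j : Fin 2, i ≠ j → ∀ z, α z = z →
      G.Adj ((iso.symm i).1 : V) z → z = ((iso.symm j).1 : V) := by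
    intro i j hij z hz hadj
    set z1 : ({v : V | α v = v} : Set V) := ⟨z, hz⟩ with hz1
    have hadj1 : (FixSubgraph G α).Adj (iso.symm i).1 z1 := hadj
    have hm : z1 ∈ c.supp := by
      rw [SimpleGraph.ConnectedComponent.mem_supp_iff]
      have h2 := (iso.symm i).2
      rw [SimpleGraph.ConnectedComponent.mem_supp_iff] at h2
      rw [← h2]
      exact SimpleGraph.ConnectedComponent.sound hadj1.symm.reachable
    have hadj2 : ((FixSubgraph G α).induce c.supp).Adj (iso.symm i) ⟨z1, hm⟩ := hadj1
    have hK : K2.Adj (iso (iso.symm i)) (iso ⟨z1, hm⟩) := iso.map_adj_iff.mpr hadj2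
    rw [iso.apply_symm_apply] at hK
    have hne : iso ⟨z1, hm⟩ ≠ i := fun h => by
      rw [h] at hK; exact K2.irrefl hK
    have hj : iso ⟨z1, hm⟩ = j := by omega
    have : (⟨z1, hm⟩ : c.supp) = iso.symm j :=
      iso.injective (by rw [hj, iso.apply_symm_apply])
    exact congrArg (fun t => (t.1 : V)) this
  refine ⟨((iso.symm 0).1 : V), ((iso.symm 1).1 : V), (iso.symm 0).1.2, (iso.symm 1).1.2,
    ?_, key 0 1 (by decide), key 1 0 (by decide)⟩
  have : ((FixSubgraph G α).induce c.supp).Adj (iso.symm 0) (iso.symm 1) :=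
    iso.symm.map_adj_iff.mpr (by rw [K2]; decide : K2.Adj 0 1)
  exact this

lemma star_extract (c : (FixSubgraph G α).ConnectedComponent)
    (iso : ((FixSubgraph G α).induce c.supp) ≃g Star3) :
    ∃ a w b : V, α a = a ∧ α w = w ∧ α b = b ∧ G.Adj a w ∧ G.Adj w b ∧ a ≠ b := by
  have hadj : ∀ j : Fin 4, j ≠ 0 →
      G.Adj ((iso.symm 0).1 : V) ((iso.symm j).1 : V) := by
    intro j hj
    have : Star3.Adj 0 j := by
      rw [Star3, SimpleGraph.fromRel_adj]
      exact ⟨Ne.symm hj, Or.inl rfl⟩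
    have h2 : ((FixSubgraph G α).induce c.supp).Adj (iso.symm 0) (iso.symm j) :=
      iso.symm.map_adj_iff.mpr this
    exact h2
  refine ⟨((iso.symm 1).1 : V), ((iso.symm 0).1 : V), ((iso.symm 2).1 : V),
    (iso.symm 1).1.2, (iso.symm 0).1.2, (iso.symm 2).1.2,
    (hadj 1 (by decide)).symm, hadj 2 (by decide), ?_⟩
  intro h
  have : (iso.symm 1) = (iso.symm 2) := Subtype.ext (Subtype.ext h)
  have := iso.symm.toEquiv.injective this
  exact absurd this (by decide)

end AuxLemmas

/-- in a connected cubic 3-regular graph admitting a 2-regular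
subgroup, no order-2 automorphism has both a `K2` rigid cell and a `K_{1,3}`
rigid cell. -/
theorem stmt6 {V : Type*} [Fintype V] (G : SimpleGraph V)
    (hconn : G.Connected) (hcubic : IsCubic G)
    (hreg : AutSimplyTransitive G 3)
    (hsub : ∃ H : Subgroup (Equiv.Perm V),
      (∀ g ∈ H, IsAut G g) ∧ SubgroupSimplyTransitive G H 2) :
    ¬ ∃ α : Equiv.Perm V, IsAut G α ∧ orderOf α = 2 ∧
      (∃ c : (FixSubgraph G α).ConnectedComponent, ComponentIso G α c K2) ∧
      (∃ c : (FixSubgraph G α).ConnectedComponent, ComponentIso G α c Star3) := by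
  classical
  rintro ⟨α, hαaut, hα2, ⟨c1, ⟨iso1⟩⟩, ⟨c2, ⟨iso2⟩⟩⟩
  obtain ⟨H, hHaut, hH2⟩ := hsub
  obtain ⟨u, v, hu, hv, huv, hcu, hcv⟩ := k2_extract c1 iso1
  obtain ⟨a, w, b, hfa, hfw, hfb, haw, hwb, hab⟩ := star_extract c2 iso2
  have hαα : ∀ t, α (α t) = t := by
    intro t
    have h := pow_orderOf_eq_one α
    rw [hα2, pow_two] at h
    calc α (α t) = (α * α) t := rfl
      _ = (1 : Equiv.Perm V) t := by rw [h]
      _ = t := rfl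
  -- no nontrivial element of H fixes a 2-arc pointwise
  have fix2 : ∀ s : Fin 3 → V, IsSArc G 2 s → ∀ k : H,
      (∀ i : Fin 3, (k : Equiv.Perm V) (s i) = s i) → (k : Equiv.Perm V) = 1 := by
    intro s hs k hk
    obtain ⟨g, hg, hgu⟩ := hH2 s s hs hs
    have h1 : k = g := hgu k hk
    have h2 : (1 : H) = g := hgu 1 (by intro i; simp)
    rw [h1, ← h2]; rfl
  -- a neighbour x ≠ v of u
  obtain ⟨x, hux, hxv⟩ : ∃ x, G.Adj u x ∧ x ≠ v := by
    by_contra hcon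
    push_neg at hcon
    have hsubs : G.neighborSet u ⊆ {v} := by
      intro t ht; exact hcon t ht
    have := Set.ncard_le_ncard hsubs (Set.finite_singleton v)
    rw [hcubic u, Set.ncard_singleton] at this; omega
  have hxfix : α x ≠ x := fun h => hxv (hcu x h hux)
  set y := α x with hy
  have hyx : y ≠ x := hxfix
  have hyv : y ≠ v := fun h => hxv (by rw [← hαα x, ← hy, h, hv])
  have huy : G.Adj u y := by
    have : G.Adj (α u) (α x) := (hαaut u x).mpr hux
    rwa [hu, ← hy] at this
  -- a neighbour p ≠ u of v
  obtain ⟨p, hvp, hpu⟩ : ∃ p, G.Adj v p ∧ p ≠ u := by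
    by_contra hcon
    push_neg at hcon
    have hsubs : G.neighborSet v ⊆ {u} := by
      intro t ht; exact hcon t ht
    have := Set.ncard_le_ncard hsubs (Set.finite_singleton u)
    rw [hcubic v, Set.ncard_singleton] at this; omega
  have hpfix : α p ≠ p := fun h => hpu (hcv p h hvp)
  set q := α p with hq
  have hqp : q ≠ p := hpfix
  have hqu : q ≠ u := fun h => hpu (by rw [← hαα p, ← hq, h, hu])
  have hvq : G.Adj v q := by
    have : G.Adj (α v) (α p) := (hαaut v p).mpr hvp
    rwa [hv, ← hq] at this
  -- neighbours of v are exactly u, p, q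
  have hNv : ({u, p, q} : Set V) = G.neighborSet v := by
    apply Set.eq_of_subset_of_ncard_le
    · intro t ht
      simp only [Set.mem_insert_iff, Set.mem_singleton_iff] at ht
      rcases ht with rfl | rfl | rfl
      · exact huv.symm
      · exact hvp
      · exact hvq
    · rw [hcubic v]
      rw [Set.ncard_eq_three.mpr ⟨u, p, q, Ne.symm hpu, Ne.symm hqu, Ne.symm hqp, rfl⟩]
    · exact Set.toFinite _
  -- the H-element mapping (x,u,v) to (y,u,v)
  have ha2 : IsSArc G 2 ![x, u, v] := isSArc2' G hux.symm huv hxv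
  have hb2 : IsSArc G 2 ![y, u, v] := isSArc2' G huy.symm huv hyv
  obtain ⟨h, hh, -⟩ := hH2 _ _ ha2 hb2
  have hhx : (h : Equiv.Perm V) x = y := by simpa using hh 0
  have hhu : (h : Equiv.Perm V) u = u := by simpa using hh 1
  have hhv : (h : Equiv.Perm V) v = v := by simpa using hh 2
  have hhaut : IsAut G (h : Equiv.Perm V) := hHaut h h.2
  have hmem : (h : Equiv.Perm V) p ∈ G.neighborSet v := by
    have : G.Adj ((h : Equiv.Perm V) v) ((h : Equiv.Perm V) p) := (hhaut v p).mpr hvp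
    rwa [hhv] at this
  rw [← hNv] at hmem
  simp only [Set.mem_insert_iff, Set.mem_singleton_iff] at hmem
  have hhpu : (h : Equiv.Perm V) p ≠ u := fun he =>
    hpu ((h : Equiv.Perm V).injective (by rw [he, hhu]))
  rcases hmem with he | hhp | hhp
  · exact hhpu he
  · -- h fixes the 2-arc (p, v, u): contradiction
    have hk : (h : Equiv.Perm V) = 1 := by
      refine fix2 ![p, v, u] (isSArc2' G hvp.symm huv.symm hpu) h ?_
      intro i; fin_cases i
      · simpa using hhp
      · simpa using hhv
      · simpa using hhu
    rw [hk] at hhx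
    exact hyx (by simpa using hhx.symm)
  · -- h swaps p and q
    have hhq : (h : Equiv.Perm V) q = p := by
      have hm2 : (h : Equiv.Perm V) q ∈ G.neighborSet v := by
        have : G.Adj ((h : Equiv.Perm V) v) ((h : Equiv.Perm V) q) := (hhaut v q).mpr hvq
        rwa [hhv] at this
      rw [← hNv] at hm2
      simp only [Set.mem_insert_iff, Set.mem_singleton_iff] at hm2
      rcases hm2 with he | he | he
      · exact absurd ((h : Equiv.Perm V).injective (by rw [he, hhu])) hqu
      · exact he
      · exact absurd ((h : Equiv.Perm V).injective (by rw [he, hhp])) (Ne.symm hqp)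
    set z := if p = x then q else p with hzdef
    have hvz : G.Adj v z := by rw [hzdef]; split <;> assumption
    have hzx : z ≠ x := by
      rw [hzdef]; split
      · rename_i hpx
        intro hqx
        exact hyx (by rw [hy, ← hpx, ← hq]; exact hqx.trans hpx.symm)
      · rename_i hpx; exact hpx
    have hzu : z ≠ u := by rw [hzdef]; split <;> assumption
    have hfixz : α ((h : Equiv.Perm V) z) = z := by
      rw [hzdef]; split
      · rw [hhq, hq]
      · rw [hhp, hq]; exact hαα p
    have ht : IsSArc G 3 ![x, u, v, z] := isSArc3' G hux.symm huv hvz hxv (Ne.symm hzx) (Ne.symm hzu)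
    obtain ⟨g, -, hgu2⟩ := hreg _ _ ht ht
    have e1 : α * (h : Equiv.Perm V) = g := by
      refine hgu2 _ ⟨?_, ?_⟩
      · intro s t
        calc G.Adj ((α * (h:Equiv.Perm V)) s) ((α * (h:Equiv.Perm V)) t)
            = G.Adj (α ((h:Equiv.Perm V) s)) (α ((h:Equiv.Perm V) t)) := rfl
          _ ↔ G.Adj ((h:Equiv.Perm V) s) ((h:Equiv.Perm V) t) := hαaut _ _
          _ ↔ G.Adj s t := hhaut s t
      · intro i; fin_cases i
        · simpa [Equiv.Perm.mul_apply, hhx, hy] using hαα x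
        · simp [Equiv.Perm.mul_apply, hhu, hu]
        · simp [Equiv.Perm.mul_apply, hhv, hv]
        · simpa [Equiv.Perm.mul_apply] using hfixz
    have e2 : (1 : Equiv.Perm V) = g := by
      refine hgu2 1 ⟨fun s t => by simp, by intro i; simp⟩
    have hα1 : α = (h : Equiv.Perm V)⁻¹ := eq_inv_of_mul_eq_one_left (e1.trans e2.symm)
    have hαmem : α ∈ H := hα1 ▸ inv_mem h.2
    have hfin := fix2 ![a, w, b] (isSArc2' G haw hwb hab) ⟨α, hαmem⟩ ?_
    · have : α = 1 := hfin
      rw [this, orderOf_one] at hα2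
      omega
    · intro i; fin_cases i
      · simpa using hfa
      · simpa using hfw
      · simpa using hfb
end

section
/- Let X be a finite connected cubic graph whose full automorphism group acts simply transitively on the 5-arcs of X and contains a subgroup acting simply transitively on the 4-arcs of X. Then there is no automorphism α of X of order 2 such that the subgraph of X induced on the set Fix(α) of vertices fixed by α has both a connected component isomorphic to the H-tree (the 6-vertex tree consisting of two adjacent central vertices each adjacent to two further leaves) and a connected component isomorphic to the A-tree (the 10-vertex tree consisting of a root of degree 3 whose three neighbours are each adjacent to two further leaves). -/
open SimpleGraph

section AuxStmt9

open SimpleGraph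

variable {V : Type*}

lemma isAut_one' (G : SimpleGraph V) : IsAut G 1 := fun u v => by simp

lemma isAut_mul' {G : SimpleGraph V} {g h : Equiv.Perm V} (hg : IsAut G g) (hh : IsAut G h) :
    IsAut G (g * h) := fun u v => by
  rw [Equiv.Perm.mul_apply, Equiv.Perm.mul_apply, hg, hh]

lemma three_nbrs {G : SimpleGraph V} (hc : IsCubic G) {v u : V} (hu : G.Adj v u) :
    ∃ p q : V, p ≠ q ∧ p ≠ u ∧ q ≠ u ∧ G.Adj v p ∧ G.Adj v q ∧
      ∀ x : V, G.Adj v x → x = u ∨ x = p ∨ x = q := by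
  have h3 := hc v
  rw [Set.ncard_eq_three] at h3
  obtain ⟨a, b, c, hab, hac, hbc, hs⟩ := h3
  have ha : G.Adj v a := by
    have : a ∈ G.neighborSet v := by rw [hs]; simp
    exact this
  have hb : G.Adj v b := by
    have : b ∈ G.neighborSet v := by rw [hs]; simp
    exact this
  have hc' : G.Adj v c := by
    have : c ∈ G.neighborSet v := by rw [hs]; simp
    exact this
  have hall : ∀ x : V, G.Adj v x → x = a ∨ x = b ∨ x = c := by
    intro x hx
    have hx' : x ∈ G.neighborSet v := hx
    rw [hs] at hx'
    simpa using hx'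
  have hu' := hall u hu
  rcases hu' with rfl | rfl | rfl
  · exact ⟨b, c, hbc, hab.symm, hac.symm, hb, hc', fun x hx => by
      rcases hall x hx with h | h | h <;> tauto⟩
  · exact ⟨a, c, hac, hab, hbc.symm, ha, hc', fun x hx => by
      rcases hall x hx with h | h | h <;> tauto⟩
  · exact ⟨a, b, hab, hac, hbc, ha, hb, fun x hx => by
      rcases hall x hx with h | h | h <;> tauto⟩

lemma nbhd_classify {G : SimpleGraph V} [Fintype V] (hc : IsCubic G) {v x y z : V}
    (hxy : x ≠ y) (hxz : x ≠ z) (hyz : y ≠ z)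
    (hx : G.Adj v x) (hy : G.Adj v y) (hz : G.Adj v z) :
    ∀ t : V, G.Adj v t → t = x ∨ t = y ∨ t = z := by
  have hsub : ({x, y, z} : Set V) ⊆ G.neighborSet v := by
    intro t ht
    simp only [Set.mem_insert_iff, Set.mem_singleton_iff] at ht
    rcases ht with rfl | rfl | rfl <;> assumption
  have h3 : ({x, y, z} : Set V).ncard = 3 :=
    Set.ncard_eq_three.mpr ⟨x, y, z, hxy, hxz, hyz, rfl⟩
  have heq := Set.eq_of_subset_of_ncard_le hsub (by rw [hc v, h3]) (Set.toFinite _)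
  intro t ht
  have ht' : t ∈ G.neighborSet v := ht
  rw [← heq] at ht'
  simpa using ht'

section Cvx
variable {W : Type*} {G : SimpleGraph V} {α : Equiv.Perm V}
  {c : (FixSubgraph G α).ConnectedComponent} {P : SimpleGraph W}

/-- The vertex of `V` corresponding to pattern vertex `i` via the component iso. -/
def cvx (e : (FixSubgraph G α).induce c.supp ≃g P) (i : W) : V :=
  ((e.symm i).1 : {v : V | α v = v}).1

lemma cvx_fixed (e : (FixSubgraph G α).induce c.supp ≃g P) (i : W) :
    α (cvx e i) = cvx e i := (e.symm i).1.2

lemma cvx_inj (e : (FixSubgraph G α).induce c.supp ≃g P) {i j : W}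
    (hij : cvx e i = cvx e j) : i = j := by
  have h : e.symm i = e.symm j := Subtype.ext (Subtype.ext hij)
  have := congrArg e h
  simpa using this

lemma cvx_adj (e : (FixSubgraph G α).induce c.supp ≃g P) {i j : W}
    (h : P.Adj i j) : G.Adj (cvx e i) (cvx e j) := by
  have h2 : ((FixSubgraph G α).induce c.supp).Adj (e.symm i) (e.symm j) :=
    e.symm.map_adj_iff.mpr h
  exact h2

lemma cvx_nbr (e : (FixSubgraph G α).induce c.supp ≃g P) {i : W} {w : V}
    (hw : α w = w) (hadj : G.Adj (cvx e i) w) :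
    ∃ j : W, P.Adj i j ∧ w = cvx e j := by
  have hAdjFix : (FixSubgraph G α).Adj (e.symm i).1 ⟨w, hw⟩ := hadj
  have hmem : (⟨w, hw⟩ : {v : V | α v = v}) ∈ c.supp := by
    rw [SimpleGraph.ConnectedComponent.mem_supp_iff]
    have hx : (e.symm i).1 ∈ c.supp := (e.symm i).2
    rw [SimpleGraph.ConnectedComponent.mem_supp_iff] at hx
    rw [← hx]
    exact SimpleGraph.ConnectedComponent.connectedComponentMk_eq_of_adj hAdjFix.symm
  refine ⟨e ⟨⟨w, hw⟩, hmem⟩, ?_, ?_⟩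
  · have h3 : ((FixSubgraph G α).induce c.supp).Adj (e.symm i) ⟨⟨w, hw⟩, hmem⟩ := hadj
    have h4 := e.map_adj_iff.mpr h3
    simpa using h4
  · show w = cvx e (e ⟨⟨w, hw⟩, hmem⟩)
    unfold cvx
    rw [RelIso.symm_apply_apply]

end Cvx

lemma inj5' {v0 v1 v2 v3 v4 : V} (h01 : v0 ≠ v1) (h02 : v0 ≠ v2) (h03 : v0 ≠ v3)
    (h04 : v0 ≠ v4) (h12 : v1 ≠ v2) (h13 : v1 ≠ v3) (h14 : v1 ≠ v4)
    (h23 : v2 ≠ v3) (h24 : v2 ≠ v4) (h34 : v3 ≠ v4) :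
    Function.Injective (![v0, v1, v2, v3, v4] : Fin 5 → V) := by
  intro i j hij
  fin_cases i <;> fin_cases j <;>
    first
      | rfl
      | exact absurd hij h01
      | exact absurd hij (Ne.symm h01)
      | exact absurd hij h02
      | exact absurd hij (Ne.symm h02)
      | exact absurd hij h03
      | exact absurd hij (Ne.symm h03)
      | exact absurd hij h04
      | exact absurd hij (Ne.symm h04)
      | exact absurd hij h12
      | exact absurd hij (Ne.symm h12)
      | exact absurd hij h13
      | exact absurd hij (Ne.symm h13)
      | exact absurd hij h14
      | exact absurd hij (Ne.symm h14)
      | exact absurd hij h23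
      | exact absurd hij (Ne.symm h23)
      | exact absurd hij h24
      | exact absurd hij (Ne.symm h24)
      | exact absurd hij h34
      | exact absurd hij (Ne.symm h34)

lemma inj6' {v0 v1 v2 v3 v4 v5 : V} (h01 : v0 ≠ v1) (h02 : v0 ≠ v2) (h03 : v0 ≠ v3)
    (h04 : v0 ≠ v4) (h05 : v0 ≠ v5) (h12 : v1 ≠ v2) (h13 : v1 ≠ v3) (h14 : v1 ≠ v4)
    (h15 : v1 ≠ v5) (h23 : v2 ≠ v3) (h24 : v2 ≠ v4) (h25 : v2 ≠ v5)
    (h34 : v3 ≠ v4) (h35 : v3 ≠ v5) (h45 : v4 ≠ v5) :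
    Function.Injective (![v0, v1, v2, v3, v4, v5] : Fin 6 → V) := by
  intro i j hij
  fin_cases i <;> fin_cases j <;>
    first
      | rfl
      | exact absurd hij h01
      | exact absurd hij (Ne.symm h01)
      | exact absurd hij h02
      | exact absurd hij (Ne.symm h02)
      | exact absurd hij h03
      | exact absurd hij (Ne.symm h03)
      | exact absurd hij h04
      | exact absurd hij (Ne.symm h04)
      | exact absurd hij h12
      | exact absurd hij (Ne.symm h12)
      | exact absurd hij h13
      | exact absurd hij (Ne.symm h13)
      | exact absurd hij h14
      | exact absurd hij (Ne.symm h14)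
      | exact absurd hij h23
      | exact absurd hij (Ne.symm h23)
      | exact absurd hij h24
      | exact absurd hij (Ne.symm h24)
      | exact absurd hij h34
      | exact absurd hij (Ne.symm h34)
      | exact absurd hij h05
      | exact absurd hij (Ne.symm h05)
      | exact absurd hij h15
      | exact absurd hij (Ne.symm h15)
      | exact absurd hij h25
      | exact absurd hij (Ne.symm h25)
      | exact absurd hij h35
      | exact absurd hij (Ne.symm h35)
      | exact absurd hij h45
      | exact absurd hij (Ne.symm h45)

end AuxStmt9

/-- in a connected cubic 5-regular graph admitting a 4-regular
subgroup, no order-2 automorphism has both an `H`-tree rigid cell and an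
`A`-tree rigid cell. -/
theorem stmt9 {V : Type*} [Fintype V] (G : SimpleGraph V)
    (hconn : G.Connected) (hcubic : IsCubic G)
    (hreg : AutSimplyTransitive G 5)
    (hsub : ∃ H : Subgroup (Equiv.Perm V),
      (∀ g ∈ H, IsAut G g) ∧ SubgroupSimplyTransitive G H 4) :
    ¬ ∃ α : Equiv.Perm V, IsAut G α ∧ orderOf α = 2 ∧
      (∃ c : (FixSubgraph G α).ConnectedComponent, ComponentIso G α c Htree) ∧
      (∃ c : (FixSubgraph G α).ConnectedComponent, ComponentIso G α c Atree) := by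
  rintro ⟨α, hαaut, hαord, ⟨cH, ⟨eH⟩⟩, ⟨cA, ⟨eA⟩⟩⟩
  obtain ⟨H, hHaut, hHreg⟩ := hsub
  -- α is an involution
  have hmulα : α * α = 1 := by
    rw [← sq, ← hαord]; exact pow_orderOf_eq_one α
  have hα2 : ∀ x : V, α (α x) = x := by
    intro x
    have := congrArg (fun g : Equiv.Perm V => g x) hmulα
    simpa using this
  have hfm : ∀ x y : V, α x ≠ x → α y = y → x ≠ y := by
    intro x y hx hy hxy
    rw [hxy] at hx; exact hx hy
  -- pattern graph adjacency facts
  have hH01 : Htree.Adj 0 1 := by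
    rw [Htree, SimpleGraph.fromRel_adj]; exact ⟨by decide, by decide⟩
  have hH02 : Htree.Adj 0 2 := by
    rw [Htree, SimpleGraph.fromRel_adj]; exact ⟨by decide, by decide⟩
  have hH03 : Htree.Adj 0 3 := by
    rw [Htree, SimpleGraph.fromRel_adj]; exact ⟨by decide, by decide⟩
  have hH14 : Htree.Adj 1 4 := by
    rw [Htree, SimpleGraph.fromRel_adj]; exact ⟨by decide, by decide⟩
  have hH15 : Htree.Adj 1 5 := by
    rw [Htree, SimpleGraph.fromRel_adj]; exact ⟨by decide, by decide⟩
  have hHleaf2 : ∀ j : Fin 6, Htree.Adj 2 j → j = 0 := by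
    intro j hj
    rw [Htree, SimpleGraph.fromRel_adj] at hj
    fin_cases j <;> first | rfl | (exact absurd hj (by decide))
  have hHleaf4 : ∀ j : Fin 6, Htree.Adj 4 j → j = 1 := by
    intro j hj
    rw [Htree, SimpleGraph.fromRel_adj] at hj
    fin_cases j <;> first | rfl | (exact absurd hj (by decide))
  have hA41 : Atree.Adj 4 1 := by
    rw [Atree, SimpleGraph.fromRel_adj]; exact ⟨by decide, by decide⟩
  have hA10 : Atree.Adj 1 0 := by
    rw [Atree, SimpleGraph.fromRel_adj]; exact ⟨by decide, by decide⟩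
  have hA02 : Atree.Adj 0 2 := by
    rw [Atree, SimpleGraph.fromRel_adj]; exact ⟨by decide, by decide⟩
  have hA26 : Atree.Adj 2 6 := by
    rw [Atree, SimpleGraph.fromRel_adj]; exact ⟨by decide, by decide⟩
  have hAn46 : ¬ Atree.Adj 4 6 := by
    rw [Atree, SimpleGraph.fromRel_adj]; decide
  -- the A-tree 4-arc F = (4, 1, 0, 2, 6)
  have hAne : ∀ i j : Fin 10, i ≠ j → cvx eA i ≠ cvx eA j :=
    fun i j hij h => hij (cvx_inj eA h)
  have hFarc : IsSArc G 4 ![cvx eA 4, cvx eA 1, cvx eA 0, cvx eA 2, cvx eA 6] := by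
    constructor
    · exact inj5' (hAne 4 1 (by decide)) (hAne 4 0 (by decide)) (hAne 4 2 (by decide))
        (hAne 4 6 (by decide)) (hAne 1 0 (by decide)) (hAne 1 2 (by decide))
        (hAne 1 6 (by decide)) (hAne 0 2 (by decide)) (hAne 0 6 (by decide))
        (hAne 2 6 (by decide))
    · intro i
      fin_cases i
      · exact cvx_adj eA hA41
      · exact cvx_adj eA hA10
      · exact cvx_adj eA hA02
      · exact cvx_adj eA hA26
  -- α is not in H (it fixes the 4-arc F pointwise)
  have hK1 : α ∉ H := by
    intro hmem
    obtain ⟨g, hg, huniq⟩ := hHreg _ _ hFarc hFarc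
    have h1 : (⟨α, hmem⟩ : H) = g := by
      apply huniq
      intro i
      fin_cases i
      · exact cvx_fixed eA 4
      · exact cvx_fixed eA 1
      · exact cvx_fixed eA 0
      · exact cvx_fixed eA 2
      · exact cvx_fixed eA 6
    have h2 : (1 : H) = g := by
      apply huniq
      intro i
      simp
    have hα1 : α = 1 := Subtype.ext_iff.mp (h1.trans h2.symm)
    rw [hα1, orderOf_one] at hαord
    exact absurd hαord (by decide)
  -- no 4-arc has adjacent endpoints
  have hK2 : ∀ q : Fin 5 → V, IsSArc G 4 q → ¬ G.Adj (q 0) (q 4) := by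
    intro q hq hadj
    obtain ⟨g, hg, -⟩ := hHreg _ _ hq hFarc
    have hgaut : IsAut G (g : Equiv.Perm V) := hHaut _ g.2
    have h5 : G.Adj ((g : Equiv.Perm V) (q 0)) ((g : Equiv.Perm V) (q 4)) :=
      (hgaut _ _).mpr hadj
    rw [hg 0, hg 4] at h5
    have h6 : G.Adj (cvx eA 4) (cvx eA 6) := h5
    obtain ⟨j, hadj', heq⟩ := cvx_nbr eA (cvx_fixed eA 6) h6
    have hj : (6 : Fin 10) = j := cvx_inj eA heq
    rw [← hj] at hadj'
    exact hAn46 hadj'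
  -- H-tree vertices
  have hHne : ∀ i j : Fin 6, i ≠ j → cvx eH i ≠ cvx eH j :=
    fun i j hij h => hij (cvx_inj eH h)
  set uu := cvx eH 0 with huu_def
  set vv := cvx eH 1 with hvv_def
  set a1 := cvx eH 2 with ha1_def
  set a2 := cvx eH 3 with ha2_def
  set b1 := cvx eH 4 with hb1_def
  set b2 := cvx eH 5 with hb2_def
  have hfix_uu : α uu = uu := cvx_fixed eH 0
  have hfix_vv : α vv = vv := cvx_fixed eH 1
  have hfix_a1 : α a1 = a1 := cvx_fixed eH 2
  have hfix_a2 : α a2 = a2 := cvx_fixed eH 3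
  have hfix_b1 : α b1 = b1 := cvx_fixed eH 4
  have hfix_b2 : α b2 = b2 := cvx_fixed eH 5
  have hadj_uv : G.Adj uu vv := cvx_adj eH hH01
  have hadj_ua1 : G.Adj uu a1 := cvx_adj eH hH02
  have hadj_ua2 : G.Adj uu a2 := cvx_adj eH hH03
  have hadj_vb1 : G.Adj vv b1 := cvx_adj eH hH14
  have hadj_vb2 : G.Adj vv b2 := cvx_adj eH hH15
  have hNu : ∀ t : V, G.Adj uu t → t = vv ∨ t = a1 ∨ t = a2 :=
    nbhd_classify hcubic (hHne 1 2 (by decide)) (hHne 1 3 (by decide))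
      (hHne 2 3 (by decide)) hadj_uv hadj_ua1 hadj_ua2
  have hNv : ∀ t : V, G.Adj vv t → t = uu ∨ t = b1 ∨ t = b2 :=
    nbhd_classify hcubic (hHne 0 4 (by decide)) (hHne 0 5 (by decide))
      (hHne 4 5 (by decide)) hadj_uv.symm hadj_vb1 hadj_vb2
  -- the non-fixed neighbours of the leaves b1 and a1
  obtain ⟨w1, w2, hw12, hw1v, hw2v, hbw1, hbw2, hNb1⟩ := three_nbrs hcubic hadj_vb1.symm
  obtain ⟨p1, p2, hp12, hp1u, hp2u, hap1, hap2, hNa1⟩ := three_nbrs hcubic hadj_ua1.symm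
  have hw1nf : α w1 ≠ w1 := by
    intro hfix
    obtain ⟨j, hadj', heq⟩ := cvx_nbr eH hfix hbw1
    rw [hHleaf4 j hadj'] at heq
    exact hw1v heq
  have hαw1 : α w1 = w2 := by
    have hadj' : G.Adj b1 (α w1) := by
      have := (hαaut b1 w1).mpr hbw1
      rwa [hfix_b1] at this
    rcases hNb1 _ hadj' with h | h | h
    · exfalso
      have h2 := congrArg α h
      rw [hα2, hfix_vv] at h2
      exact hw1v h2
    · exact absurd h hw1nf
    · exact h
  have hαw2 : α w2 = w1 := by rw [← hαw1, hα2]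
  have hw2nf : α w2 ≠ w2 := by
    rw [hαw2]; exact hw12
  have hp1nf : α p1 ≠ p1 := by
    intro hfix
    obtain ⟨j, hadj', heq⟩ := cvx_nbr eH hfix hap1
    rw [hHleaf2 j hadj'] at heq
    exact hp1u heq
  have hαp1 : α p1 = p2 := by
    have hadj' : G.Adj a1 (α p1) := by
      have := (hαaut a1 p1).mpr hap1
      rwa [hfix_a1] at this
    rcases hNa1 _ hadj' with h | h | h
    · exfalso
      have h2 := congrArg α h
      rw [hα2, hfix_uu] at h2
      exact hp1u h2
    · exact absurd h hp1nf
    · exact h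
  have hαp2 : α p2 = p1 := by rw [← hαp1, hα2]
  have hp2nf : α p2 ≠ p2 := by
    rw [hαp2]; exact hp12
  -- the 4-arcs Q1 = (a1,uu,vv,b1,w1), Q2 = (a1,uu,vv,b1,w2)
  have hQ1arc : IsSArc G 4 ![a1, uu, vv, b1, w1] := by
    constructor
    · exact inj5' (hHne 2 0 (by decide)) (hHne 2 1 (by decide)) (hHne 2 4 (by decide))
        (Ne.symm (hfm w1 a1 hw1nf hfix_a1)) (hHne 0 1 (by decide)) (hHne 0 4 (by decide))
        (Ne.symm (hfm w1 uu hw1nf hfix_uu)) (hHne 1 4 (by decide))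
        (Ne.symm (hfm w1 vv hw1nf hfix_vv)) (Ne.symm (hfm w1 b1 hw1nf hfix_b1))
    · intro i
      fin_cases i
      · exact hadj_ua1.symm
      · exact hadj_uv
      · exact hadj_vb1
      · exact hbw1
  have hQ2arc : IsSArc G 4 ![a1, uu, vv, b1, w2] := by
    constructor
    · exact inj5' (hHne 2 0 (by decide)) (hHne 2 1 (by decide)) (hHne 2 4 (by decide))
        (Ne.symm (hfm w2 a1 hw2nf hfix_a1)) (hHne 0 1 (by decide)) (hHne 0 4 (by decide))
        (Ne.symm (hfm w2 uu hw2nf hfix_uu)) (hHne 1 4 (by decide))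
        (Ne.symm (hfm w2 vv hw2nf hfix_vv)) (Ne.symm (hfm w2 b1 hw2nf hfix_b1))
    · intro i
      fin_cases i
      · exact hadj_ua1.symm
      · exact hadj_uv
      · exact hadj_vb1
      · exact hbw2
  have hnadj_a1w1 : ¬ G.Adj a1 w1 := fun h => hK2 _ hQ1arc h
  have hp1w1 : p1 ≠ w1 := by
    intro h
    rw [h] at hap1
    exact hnadj_a1w1 hap1
  -- the 4-arc R = (p1,a1,uu,vv,b1)
  have hRarc : IsSArc G 4 ![p1, a1, uu, vv, b1] := by
    constructor
    · exact inj5' (hfm p1 a1 hp1nf hfix_a1) (hfm p1 uu hp1nf hfix_uu)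
        (hfm p1 vv hp1nf hfix_vv) (hfm p1 b1 hp1nf hfix_b1)
        (hHne 2 0 (by decide)) (hHne 2 1 (by decide)) (hHne 2 4 (by decide))
        (hHne 0 1 (by decide)) (hHne 0 4 (by decide)) (hHne 1 4 (by decide))
    · intro i
      fin_cases i
      · exact hap1.symm
      · exact hadj_ua1.symm
      · exact hadj_uv
      · exact hadj_vb1
  -- the neighbours of w1 other than b1
  obtain ⟨x1, x2, hx12, hx1b, hx2b, hwx1, hwx2, hNw1⟩ := three_nbrs hcubic hbw1.symm
  have hxne : ∀ x : V, G.Adj w1 x → x ≠ uu ∧ x ≠ vv ∧ x ≠ a1 := by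
    intro x hx
    refine ⟨?_, ?_, ?_⟩
    · rintro rfl
      rcases hNu _ hx.symm with h | h | h
      · exact hfm w1 vv hw1nf hfix_vv h
      · exact hfm w1 a1 hw1nf hfix_a1 h
      · exact hfm w1 a2 hw1nf hfix_a2 h
    · rintro rfl
      rcases hNv _ hx.symm with h | h | h
      · exact hfm w1 uu hw1nf hfix_uu h
      · exact hfm w1 b1 hw1nf hfix_b1 h
      · exact hfm w1 b2 hw1nf hfix_b2 h
    · rintro rfl
      exact hnadj_a1w1 hx.symm
  obtain ⟨hx1u, hx1v, hx1a⟩ := hxne x1 hwx1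
  obtain ⟨hx2u, hx2v, hx2a⟩ := hxne x2 hwx2
  -- the 5-arcs A1 = (a1,uu,vv,b1,w1,x1) and A2 = (a1,uu,vv,b1,w1,x2)
  have hA1arc : IsSArc G 5 ![a1, uu, vv, b1, w1, x1] := by
    constructor
    · exact inj6' (hHne 2 0 (by decide)) (hHne 2 1 (by decide)) (hHne 2 4 (by decide))
        (Ne.symm (hfm w1 a1 hw1nf hfix_a1)) (Ne.symm hx1a)
        (hHne 0 1 (by decide)) (hHne 0 4 (by decide))
        (Ne.symm (hfm w1 uu hw1nf hfix_uu)) (Ne.symm hx1u)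
        (hHne 1 4 (by decide)) (Ne.symm (hfm w1 vv hw1nf hfix_vv)) (Ne.symm hx1v)
        (Ne.symm (hfm w1 b1 hw1nf hfix_b1)) (Ne.symm hx1b) hwx1.ne
    · intro i
      fin_cases i
      · exact hadj_ua1.symm
      · exact hadj_uv
      · exact hadj_vb1
      · exact hbw1
      · exact hwx1
  have hA2arc : IsSArc G 5 ![a1, uu, vv, b1, w1, x2] := by
    constructor
    · exact inj6' (hHne 2 0 (by decide)) (hHne 2 1 (by decide)) (hHne 2 4 (by decide))
        (Ne.symm (hfm w1 a1 hw1nf hfix_a1)) (Ne.symm hx2a)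
        (hHne 0 1 (by decide)) (hHne 0 4 (by decide))
        (Ne.symm (hfm w1 uu hw1nf hfix_uu)) (Ne.symm hx2u)
        (hHne 1 4 (by decide)) (Ne.symm (hfm w1 vv hw1nf hfix_vv)) (Ne.symm hx2v)
        (Ne.symm (hfm w1 b1 hw1nf hfix_b1)) (Ne.symm hx2b) hwx2.ne
    · intro i
      fin_cases i
      · exact hadj_ua1.symm
      · exact hadj_uv
      · exact hadj_vb1
      · exact hbw1
      · exact hwx2
  -- τ : the unique automorphism taking A1 to A2
  obtain ⟨τ, ⟨hτaut, hτmap⟩, hτuniq⟩ := hreg _ _ hA1arc hA2arc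
  have hτa1 : τ a1 = a1 := hτmap 0
  have hτuu : τ uu = uu := hτmap 1
  have hτvv : τ vv = vv := hτmap 2
  have hτb1 : τ b1 = b1 := hτmap 3
  have hτw1 : τ w1 = w1 := hτmap 4
  have hτx1 : τ x1 = x2 := hτmap 5
  -- h : the unique element of H taking Q1 to Q2
  obtain ⟨h, hhmap, hhuniq⟩ := hHreg _ _ hQ1arc hQ2arc
  set hh : Equiv.Perm V := (h : Equiv.Perm V) with hh_def
  have hhaut : IsAut G hh := hHaut _ h.2
  have hha1 : hh a1 = a1 := hhmap 0
  have hhuu : hh uu = uu := hhmap 1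
  have hhvv : hh vv = vv := hhmap 2
  have hhb1 : hh b1 = b1 := hhmap 3
  have hhw1 : hh w1 = w2 := hhmap 4
  have hhne1 : hh w1 ≠ w1 := by rw [hhw1]; exact fun h' => hw12 h'.symm
  -- hh swaps p1 and p2
  have hhfixfalse : hh p1 = p1 → False := by
    intro hc
    obtain ⟨g', hg', huniq'⟩ := hHreg _ _ hRarc hRarc
    have e1 : h = g' := by
      apply huniq'
      intro i
      fin_cases i
      · exact hc
      · exact hha1
      · exact hhuu
      · exact hhvv
      · exact hhb1
    have e2 : (1 : H) = g' := by
      apply huniq'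
      intro i
      simp
    have h1 : h = (1 : H) := e1.trans e2.symm
    apply hhne1
    rw [hh_def, h1]
    simp
  have hhp1 : hh p1 = p2 := by
    have hadj' : G.Adj a1 (hh p1) := by
      have := (hhaut a1 p1).mpr hap1
      rwa [hha1] at this
    rcases hNa1 _ hadj' with hc | hc | hc
    · exfalso
      have : p1 = uu := hh.injective (by rw [hc, hhuu])
      exact hp1u this
    · exact absurd hc hhfixfalse
    · exact hc
  have hhp2 : hh p2 = p1 := by
    have hadj' : G.Adj a1 (hh p2) := by
      have := (hhaut a1 p2).mpr hap2
      rwa [hha1] at this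
    rcases hNa1 _ hadj' with hc | hc | hc
    · exfalso
      have : p2 = uu := hh.injective (by rw [hc, hhuu])
      exact hp2u this
    · exact hc
    · exfalso
      have : p1 = p2 := hh.injective (by rw [hc, hhp1])
      exact hp12 this
  -- k = α ∘ hh fixes the 4-arc Q1 pointwise
  set k : Equiv.Perm V := α * hh with hk_def
  have hkaut : IsAut G k := isAut_mul' hαaut hhaut
  have hk_app : ∀ x : V, k x = α (hh x) := fun x => rfl
  have hka1 : k a1 = a1 := by rw [hk_app, hha1, hfix_a1]
  have hkuu : k uu = uu := by rw [hk_app, hhuu, hfix_uu]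
  have hkvv : k vv = vv := by rw [hk_app, hhvv, hfix_vv]
  have hkb1 : k b1 = b1 := by rw [hk_app, hhb1, hfix_b1]
  have hkw1 : k w1 = w1 := by rw [hk_app, hhw1, hαw2]
  have hkx : k x1 = x1 ∨ k x1 = x2 := by
    have hadj' : G.Adj w1 (k x1) := by
      have := (hkaut w1 x1).mpr hwx1
      rwa [hkw1] at this
    rcases hNw1 _ hadj' with hc | hc | hc
    · exfalso
      have : x1 = b1 := k.injective (by rw [hc, hkb1])
      exact hx1b this
    · exact Or.inl hc
    · exact Or.inr hc
  rcases hkx with hkx1 | hkx1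
  · -- then k = 1 and α = hh⁻¹ ∈ H, contradiction
    obtain ⟨g, hg, huniq⟩ := hreg _ _ hA1arc hA1arc
    have e1 : k = g := by
      apply huniq
      refine ⟨hkaut, ?_⟩
      intro i
      fin_cases i
      · exact hka1
      · exact hkuu
      · exact hkvv
      · exact hkb1
      · exact hkw1
      · exact hkx1
    have e2 : (1 : Equiv.Perm V) = g := by
      apply huniq
      exact ⟨isAut_one' G, fun i => rfl⟩
    have hk1 : k = 1 := e1.trans e2.symm
    have hαh : α = hh⁻¹ := eq_inv_of_mul_eq_one_left hk1
    apply hK1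
    rw [hαh, hh_def]
    exact H.inv_mem h.2
  · -- then k = τ, so τ fixes the 5-arc (p1,a1,uu,vv,b1,w1) pointwise, so τ = 1
    have hkτ : k = τ := by
      apply hτuniq
      refine ⟨hkaut, ?_⟩
      intro i
      fin_cases i
      · exact hka1
      · exact hkuu
      · exact hkvv
      · exact hkb1
      · exact hkw1
      · exact hkx1
    have hτp1 : τ p1 = p1 := by rw [← hkτ, hk_app, hhp1, hαp2]
    have hτp2 : τ p2 = p2 := by rw [← hkτ, hk_app, hhp2, hαp1]
    have hBarc : IsSArc G 5 ![p1, a1, uu, vv, b1, w1] := by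
      constructor
      · exact inj6' (hfm p1 a1 hp1nf hfix_a1) (hfm p1 uu hp1nf hfix_uu)
          (hfm p1 vv hp1nf hfix_vv) (hfm p1 b1 hp1nf hfix_b1) hp1w1
          (hHne 2 0 (by decide)) (hHne 2 1 (by decide)) (hHne 2 4 (by decide))
          (Ne.symm (hfm w1 a1 hw1nf hfix_a1)) (hHne 0 1 (by decide))
          (hHne 0 4 (by decide)) (Ne.symm (hfm w1 uu hw1nf hfix_uu))
          (hHne 1 4 (by decide)) (Ne.symm (hfm w1 vv hw1nf hfix_vv))
          (Ne.symm (hfm w1 b1 hw1nf hfix_b1))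
      · intro i
        fin_cases i
        · exact hap1.symm
        · exact hadj_ua1.symm
        · exact hadj_uv
        · exact hadj_vb1
        · exact hbw1
    obtain ⟨g, hg, huniq⟩ := hreg _ _ hBarc hBarc
    have e1 : τ = g := by
      apply huniq
      refine ⟨hτaut, ?_⟩
      intro i
      fin_cases i
      · exact hτp1
      · exact hτa1
      · exact hτuu
      · exact hτvv
      · exact hτb1
      · exact hτw1
    have e2 : (1 : Equiv.Perm V) = g := by
      apply huniq
      exact ⟨isAut_one' G, fun i => rfl⟩
    have hτ1 : τ = 1 := e1.trans e2.symm
    rw [hτ1] at hτx1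
    simp only [Equiv.Perm.one_apply] at hτx1
    exact hx12 hτx1
end
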